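/- Let λ > 1 and set λD = {λz : z ∈ D}, and let P(z) = z + 2iπ. For every arclength-integrable g : ∂D → ℂ, the function F(z) = (1/(iπ)) ∮_{∂D} g(u)/(u − z) du (boundary traversed counterclockwise) is holomorphic on Δ ∖ closure(λD) and satisfies ∫_{Δ ∖ closure(λD)} |F(z)/P(z)|² dA(z) < ∞. -/

import Mathlib

open MeasureTheory Set

noncomputable section

/-- The open sector `Δ = {z : |arg z| < π/4}`. -/
def SectorDelta : Set ℂ := {z : ℂ | 0 < z.re ∧ |z.im| < z.re}

/-- The reflected sector `π − Δ`. -/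
def SectorPiDelta : Set ℂ := (fun z => (Real.pi : ℂ) - z) '' SectorDelta

/-- The open square `D = Δ ∩ (π − Δ)` with vertices `0, π/2 − iπ/2, π, π/2 + iπ/2`. -/
def SquareD : Set ℂ := SectorDelta ∩ SectorPiDelta

/-- Membership in the Bergman space `A²(Ω)`. -/
def MemA2 (Ω : Set ℂ) (f : ℂ → ℂ) : Prop :=
  DifferentiableOn ℂ f Ω ∧ ∫⁻ z in Ω, ENNReal.ofReal (‖f z‖ ^ 2) < ⊤

/-- Membership in the weighted Bergman space `A²(Ω, w)`. -/
def MemA2W (Ω : Set ℂ) (w : ℂ → ℝ) (f : ℂ → ℂ) : Prop :=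
  DifferentiableOn ℂ f Ω ∧ ∫⁻ z in Ω, ENNReal.ofReal (‖f z‖ ^ 2 * w z) < ⊤

/-- `log⁺ t = max (log t) 0`. -/
def logPlus (t : ℝ) : ℝ := Real.log (max t 1)

/-- Starting vertices of the four sides of `∂D`, counterclockwise. -/
def sideStart : Fin 4 → ℂ
  | 0 => 0
  | 1 => ((Real.pi / 2 : ℝ) : ℂ) * (1 - Complex.I)
  | 2 => ((Real.pi : ℝ) : ℂ)
  | 3 => ((Real.pi / 2 : ℝ) : ℂ) * (1 + Complex.I)

/-- Direction vectors of the four sides of `∂D`, counterclockwise. -/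
def sideDir : Fin 4 → ℂ
  | 0 => ((Real.pi / 2 : ℝ) : ℂ) * (1 - Complex.I)
  | 1 => ((Real.pi / 2 : ℝ) : ℂ) * (1 + Complex.I)
  | 2 => ((Real.pi / 2 : ℝ) : ℂ) * (Complex.I - 1)
  | 3 => -(((Real.pi / 2 : ℝ) : ℂ) * (1 + Complex.I))

/-- Parametrization of the `k`-th side of `∂D`. -/
def sidePath (k : Fin 4) (t : ℝ) : ℂ := sideStart k + (t : ℂ) * sideDir k

/-- `g` is arclength-integrable on `∂D` (each side has constant speed). -/
def BoundaryIntegrable (g : ℂ → ℂ) : Prop :=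
  ∀ k : Fin 4, IntervalIntegrable (fun t => ‖g (sidePath k t)‖) volume 0 1

/-- `∫_{∂D} |g| log⁺|g| |du| < ∞` (each side has constant speed). -/
def BoundaryLlogL (g : ℂ → ℂ) : Prop :=
  ∀ k : Fin 4, IntervalIntegrable
    (fun t => ‖g (sidePath k t)‖ * logPlus ‖g (sidePath k t)‖) volume 0 1

/-- The Cauchy integral `(1/(2πi)) ∮_{∂D} g(u)/(u − z) du`, `∂D` counterclockwise. -/
def cauchyD (g : ℂ → ℂ) (z : ℂ) : ℂ :=
  (2 * (Real.pi : ℂ) * Complex.I)⁻¹ *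
    ∑ k : Fin 4, ∫ t in (0:ℝ)..1, g (sidePath k t) * sideDir k / (sidePath k t - z)

/-- The Cauchy transform `(𝒞g)(z) = (1/(iπ)) ∫_ℝ g(t)/(t − z) dt` on the upper half-plane. -/
def cauchyTransform (g : ℝ → ℂ) (z : ℂ) : ℂ :=
  (Complex.I * (Real.pi : ℂ))⁻¹ * ∫ t : ℝ, g t / ((t : ℂ) - z)


/-- The Cauchy-type integral `F(z) = (1/(iπ)) ∮_{∂D} g(u)/(u − z) du`,
`∂D` counterclockwise. -/
def cauchyD2 (g : ℂ → ℂ) (z : ℂ) : ℂ :=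
  (Complex.I * (Real.pi : ℂ))⁻¹ *
    ∑ k : Fin 4, ∫ t in (0:ℝ)..1, g (sidePath k t) * sideDir k / (sidePath k t - z)

lemma squareD_eq : SquareD = {z : ℂ | |z.im| < z.re ∧ z.re + |z.im| < Real.pi} := by
  ext z
  simp only [SquareD, SectorDelta, SectorPiDelta, mem_inter_iff, mem_setOf_eq, mem_image]
  constructor
  · rintro ⟨⟨h1, h2⟩, ⟨u, ⟨hu1, hu2⟩, hu3⟩⟩
    have hre : z.re = Real.pi - u.re := by rw [← hu3]; simp
    have him : z.im = -u.im := by rw [← hu3]; simp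
    constructor
    · exact h2
    · rw [hre, him, abs_neg]
      linarith
  · rintro ⟨h1, h2⟩
    have h0 : 0 ≤ |z.im| := abs_nonneg _
    refine ⟨⟨by linarith, h1⟩, (Real.pi : ℂ) - z, ⟨?_, ?_⟩, by ring⟩
    · simp; linarith
    · simp [abs_neg]; linarith

lemma dilation_eq (lam : ℝ) (hlam : 0 < lam) :
    (fun z => (lam : ℂ) * z) '' SquareD
      = {z : ℂ | |z.im| < z.re ∧ z.re + |z.im| < lam * Real.pi} := by
  rw [squareD_eq]
  ext z
  simp only [mem_image, mem_setOf_eq]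
  constructor
  · rintro ⟨u, ⟨h1, h2⟩, rfl⟩
    simp only [Complex.mul_re, Complex.mul_im, Complex.ofReal_re, Complex.ofReal_im,
      zero_mul, sub_zero, zero_add, add_zero, mul_zero]
    rw [abs_mul, abs_of_pos hlam]
    constructor
    · exact (mul_lt_mul_iff_right₀ hlam).2 h1
    · nlinarith
  · rintro ⟨h1, h2⟩
    refine ⟨(lam : ℂ)⁻¹ * z, ⟨?_, ?_⟩, ?_⟩
    · simp only [← Complex.ofReal_inv, Complex.mul_re, Complex.mul_im, Complex.ofReal_re,
        Complex.ofReal_im, zero_mul, sub_zero, zero_add, add_zero, mul_zero]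
      rw [abs_mul, abs_of_pos (inv_pos.2 hlam)]
      exact (mul_lt_mul_iff_right₀ (inv_pos.2 hlam)).2 h1
    · simp only [← Complex.ofReal_inv, Complex.mul_re, Complex.mul_im, Complex.ofReal_re,
        Complex.ofReal_im, zero_mul, sub_zero, zero_add, add_zero, mul_zero]
      rw [abs_mul, abs_of_pos (inv_pos.2 hlam)]
      rw [← mul_add]
      calc lam⁻¹ * (z.re + |z.im|) < lam⁻¹ * (lam * Real.pi) := by
            exact (mul_lt_mul_iff_right₀ (inv_pos.2 hlam)).2 h2
        _ = Real.pi := by field_simp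
    · rw [← mul_assoc, mul_inv_cancel₀ (by exact_mod_cast hlam.ne'), one_mul]

lemma mem_closure_dilation {lam : ℝ} (hlam : 0 < lam) {z : ℂ}
    (h1 : |z.im| ≤ z.re) (h2 : z.re + |z.im| ≤ lam * Real.pi) :
    z ∈ closure ((fun z => (lam : ℂ) * z) '' SquareD) := by
  rw [dilation_eq lam hlam, Metric.mem_closure_iff]
  intro ε hε
  set c : ℂ := ((lam * Real.pi / 2 : ℝ) : ℂ) with hc
  have hpi := Real.pi_pos
  set δ : ℝ := min (1/2) (ε / (2 * (‖z - c‖ + 1))) with hδ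
  have hnorm : 0 < ‖z - c‖ + 1 := by positivity
  have hδ0 : 0 < δ := by
    apply lt_min (by norm_num)
    positivity
  have hδ1 : δ ≤ 1/2 := min_le_left _ _
  refine ⟨z + (δ : ℂ) * (c - z), ⟨?_, ?_⟩, ?_⟩
  · simp only [Complex.add_re, Complex.add_im, Complex.mul_re, Complex.mul_im,
      Complex.ofReal_re, Complex.ofReal_im, Complex.sub_re, Complex.sub_im, hc,
      zero_mul, sub_zero, zero_add, add_zero, mul_zero]
    have him : |z.im + δ * (0 - z.im)| = (1 - δ) * |z.im| := by
      rw [show z.im + δ * (0 - z.im) = (1 - δ) * z.im by ring, abs_mul,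
        abs_of_pos (by linarith : (0:ℝ) < 1 - δ)]
    rw [him]
    have : (1 - δ) * |z.im| ≤ (1 - δ) * z.re := by nlinarith
    nlinarith [mul_pos hδ0 (mul_pos hlam hpi)]
  · simp only [Complex.add_re, Complex.add_im, Complex.mul_re, Complex.mul_im,
      Complex.ofReal_re, Complex.ofReal_im, Complex.sub_re, Complex.sub_im, hc,
      zero_mul, sub_zero, zero_add, add_zero, mul_zero]
    have him : |z.im + δ * (0 - z.im)| = (1 - δ) * |z.im| := by
      rw [show z.im + δ * (0 - z.im) = (1 - δ) * z.im by ring, abs_mul,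
        abs_of_pos (by linarith : (0:ℝ) < 1 - δ)]
    rw [him]
    nlinarith [mul_pos hδ0 (mul_pos hlam hpi),
      mul_le_mul_of_nonneg_left h2 (by linarith : (0:ℝ) ≤ 1 - δ)]
  · rw [dist_eq_norm]
    have : z - (z + (δ:ℂ) * (c - z)) = (δ:ℂ) * (z - c) := by ring
    rw [this, norm_mul, Complex.norm_real, Real.norm_eq_abs, abs_of_pos hδ0]
    have hδ2 : δ ≤ ε / (2 * (‖z - c‖ + 1)) := min_le_right _ _
    calc δ * ‖z - c‖ ≤ (ε / (2 * (‖z - c‖ + 1))) * ‖z - c‖ := by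
          apply mul_le_mul_of_nonneg_right hδ2 (norm_nonneg _)
      _ < ε := by
          rw [div_mul_eq_mul_div, div_lt_iff₀ (by positivity)]
          nlinarith [norm_nonneg (z - c)]

lemma isOpen_sector : IsOpen SectorDelta := by
  have : SectorDelta = {z : ℂ | 0 < z.re} ∩ {z : ℂ | |z.im| < z.re} := rfl
  rw [this]
  exact (isOpen_lt continuous_const Complex.continuous_re).inter
    (isOpen_lt (continuous_abs.comp Complex.continuous_im) Complex.continuous_re)

lemma sidePath_mem (k : Fin 4) {t : ℝ} (ht0 : 0 ≤ t) (ht1 : t ≤ 1) :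
    |(sidePath k t).im| ≤ (sidePath k t).re ∧
      (sidePath k t).re + |(sidePath k t).im| ≤ Real.pi := by
  have hpi := Real.pi_pos
  fin_cases k <;>
    simp only [sidePath, sideStart, sideDir, Complex.add_re, Complex.add_im, Complex.mul_re,
      Complex.mul_im, Complex.ofReal_re, Complex.ofReal_im, Complex.sub_re, Complex.sub_im,
      Complex.one_re, Complex.one_im, Complex.I_re, Complex.I_im, Complex.neg_re,
      Complex.neg_im, Complex.zero_re, Complex.zero_im] <;>
    constructor <;>
    (try rw [← le_sub_iff_add_le']) <;> rw [abs_le] <;> constructor <;> nlinarith [abs_nonneg t]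
lemma key_dist {z w : ℂ} (hw1 : |w.im| ≤ w.re) (hw2 : w.re + |w.im| ≤ Real.pi)
    (hz : Real.pi < z.re + |z.im|) : (z.re + |z.im| - Real.pi) / 2 ≤ ‖w - z‖ := by
  have h1 : |(w - z).re| ≤ ‖w - z‖ := by
    exact Complex.abs_re_le_norm _
  have h2 : |(w - z).im| ≤ ‖w - z‖ := by
    exact Complex.abs_im_le_norm _
  have h3 : z.re - w.re ≤ |(w - z).re| := by
    rw [Complex.sub_re]
    calc z.re - w.re = -(w.re - z.re) := by ring
      _ ≤ |w.re - z.re| := neg_le_abs _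
  have h4 : |z.im| - |w.im| ≤ |(w - z).im| := by
    rw [Complex.sub_im, abs_sub_comm]
    exact abs_sub_abs_le_abs_sub _ _
  linarith

/-- distance from points of `Ω` to the sides of `D`. -/
lemma dist_side {z : ℂ} (hz : Real.pi < z.re + |z.im|) (k : Fin 4) {t : ℝ}
    (ht : t ∈ Set.uIoc (0:ℝ) 1) :
    (z.re + |z.im| - Real.pi) / 2 ≤ ‖sidePath k t - z‖ := by
  rw [Set.uIoc_of_le (by norm_num : (0:ℝ) ≤ 1)] at ht
  obtain ⟨h1, h2⟩ := sidePath_mem k ht.1.le ht.2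
  exact key_dist h1 h2 hz

lemma pointwise_bound {g : ℂ → ℂ} {z : ℂ} (hz : Real.pi < z.re + |z.im|) (k : Fin 4)
    {t : ℝ} (ht : t ∈ Set.uIoc (0:ℝ) 1) :
    ‖g (sidePath k t) * sideDir k / (sidePath k t - z)‖
      ≤ ‖g (sidePath k t)‖ * (‖sideDir k‖ / ((z.re + |z.im| - Real.pi) / 2)) := by
  have hr : 0 < (z.re + |z.im| - Real.pi) / 2 := by linarith
  have hd := dist_side hz k ht
  rw [norm_div, norm_mul, mul_div_assoc]
  gcongr

lemma side_integral_bound {g : ℂ → ℂ} (hg : BoundaryIntegrable g) {z : ℂ}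
    (hz : Real.pi < z.re + |z.im|) (k : Fin 4) :
    ‖∫ t in (0:ℝ)..1, g (sidePath k t) * sideDir k / (sidePath k t - z)‖
      ≤ (∫ t in (0:ℝ)..1, ‖g (sidePath k t)‖) *
          (‖sideDir k‖ / ((z.re + |z.im| - Real.pi) / 2)) := by
  have hr : 0 < (z.re + |z.im| - Real.pi) / 2 := by linarith
  have hb : IntervalIntegrable
      (fun t => ‖g (sidePath k t)‖ * (‖sideDir k‖ / ((z.re + |z.im| - Real.pi) / 2)))
      volume 0 1 := (hg k).mul_const _
  have := intervalIntegral.norm_integral_le_abs_of_norm_le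
    (f := fun t => g (sidePath k t) * sideDir k / (sidePath k t - z))
    (μ := volume) (a := 0) (b := 1)
    (((ae_restrict_iff' measurableSet_uIoc).2 (Filter.Eventually.of_forall
      (fun t ht => pointwise_bound hz k ht)))) hb
  refine this.trans ?_
  rw [intervalIntegral.integral_mul_const]
  rw [abs_of_nonneg]
  apply mul_nonneg _ (by positivity)
  exact intervalIntegral.integral_nonneg (by norm_num) (fun u _ => norm_nonneg _)

lemma norm_cauchyD2_le {g : ℂ → ℂ} (hg : BoundaryIntegrable g) {z : ℂ}
    (hz : Real.pi < z.re + |z.im|) :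
    ‖cauchyD2 g z‖ ≤ (Real.pi)⁻¹ *
      ((∑ k : Fin 4, (∫ t in (0:ℝ)..1, ‖g (sidePath k t)‖) * ‖sideDir k‖) /
        ((z.re + |z.im| - Real.pi) / 2)) := by
  have hpi := Real.pi_pos
  rw [cauchyD2, norm_mul]
  have h1 : ‖(Complex.I * (Real.pi : ℂ))⁻¹‖ = (Real.pi)⁻¹ := by
    rw [norm_inv, norm_mul, Complex.norm_I,
      Complex.norm_real, one_mul, Real.norm_eq_abs, abs_of_pos hpi]
  rw [h1]
  apply mul_le_mul_of_nonneg_left _ (by positivity)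
  refine (norm_sum_le _ _).trans ?_
  rw [Finset.sum_div]
  apply Finset.sum_le_sum
  intro k _
  rw [mul_div_assoc]
  exact side_integral_bound hg hz k
lemma continuous_sidePath_sub (k : Fin 4) (x : ℂ) :
    Continuous fun t : ℝ => sidePath k t - x := by
  unfold sidePath
  fun_prop

lemma side_diff {g : ℂ → ℂ} (k : Fin 4)
    (hmeas : AEStronglyMeasurable (fun t => g (sidePath k t))
      (volume.restrict (Set.uIoc (0:ℝ) 1)))
    (hgk : IntervalIntegrable (fun t => ‖g (sidePath k t)‖) volume 0 1)
    {z₀ : ℂ} (hz : Real.pi < z₀.re + |z₀.im|) :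
    DifferentiableAt ℂ
      (fun z => ∫ t in (0:ℝ)..1, g (sidePath k t) * sideDir k / (sidePath k t - z)) z₀ := by
  set r : ℝ := (z₀.re + |z₀.im| - Real.pi) / 2 with hr
  have hrpos : 0 < r := by rw [hr]; linarith
  set ρ : ℝ := r / 2 with hρ
  have hρpos : 0 < ρ := by positivity
  have hmeas' : ∀ x : ℂ, AEStronglyMeasurable
      (fun t => g (sidePath k t) * sideDir k / (sidePath k t - x))
      (volume.restrict (Set.uIoc (0:ℝ) 1)) := by
    intro x
    exact ((hmeas.mul_const (sideDir k)).aemeasurable.div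
      (continuous_sidePath_sub k x).aemeasurable).aestronglyMeasurable
  have hmeas'' : AEStronglyMeasurable
      (fun t => g (sidePath k t) * sideDir k / (sidePath k t - z₀) ^ 2)
      (volume.restrict (Set.uIoc (0:ℝ) 1)) :=
    ((hmeas.mul_const (sideDir k)).aemeasurable.div
      ((continuous_sidePath_sub k z₀).pow 2).aemeasurable).aestronglyMeasurable
  have hF_int : IntervalIntegrable
      (fun t => g (sidePath k t) * sideDir k / (sidePath k t - z₀)) volume 0 1 := by
    refine (hgk.mul_const (‖sideDir k‖ / r)).mono_fun (hmeas' z₀) ?_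
    refine (ae_restrict_iff' measurableSet_uIoc).2 (Filter.Eventually.of_forall fun t ht => ?_)
    exact (pointwise_bound hz k ht).trans (le_abs_self _)
  have hball : ∀ x ∈ Metric.ball z₀ ρ, ∀ {t : ℝ}, t ∈ Set.uIoc (0:ℝ) 1 →
      ρ ≤ ‖sidePath k t - x‖ := by
    intro x hx t ht
    have h1 := dist_side hz k ht
    have h2 : dist (sidePath k t) z₀ ≤ dist (sidePath k t) x + dist x z₀ := dist_triangle _ _ _
    rw [Metric.mem_ball] at hx
    rw [dist_eq_norm] at h2
    rw [dist_eq_norm] at h2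
    have : r - ρ ≤ ‖sidePath k t - x‖ := by linarith
    linarith [show r - ρ = ρ by rw [hρ]; ring]
  have key := intervalIntegral.hasDerivAt_integral_of_dominated_loc_of_deriv_le
    (F := fun x t => g (sidePath k t) * sideDir k / (sidePath k t - x))
    (F' := fun x t => g (sidePath k t) * sideDir k / (sidePath k t - x) ^ 2)
    (bound := fun t => ‖g (sidePath k t)‖ * (‖sideDir k‖ / ρ ^ 2))
    (Metric.ball_mem_nhds z₀ hρpos) (Filter.Eventually.of_forall fun x => hmeas' x) hF_int hmeas''
    ?_ ((hgk.mul_const _)) ?_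
  · exact key.2.differentiableAt
  · refine Filter.Eventually.of_forall fun t ht x hx => ?_
    have h1 := hball x hx ht
    simp only [norm_div, norm_mul, norm_pow, mul_div_assoc]
    gcongr
  · refine Filter.Eventually.of_forall fun t ht x hx => ?_
    have hne : sidePath k t - x ≠ 0 := by
      intro h
      have := hball x hx ht
      rw [h, norm_zero] at this
      linarith
    have h1 : HasDerivAt (fun y : ℂ => sidePath k t - y) (-1) x := by
      simpa using (hasDerivAt_id x).const_sub (sidePath k t)
    have h2 := (h1.inv hne).const_mul (g (sidePath k t) * sideDir k)
    have heq : g (sidePath k t) * sideDir k * (-(-1) / (sidePath k t - x) ^ 2)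
        = g (sidePath k t) * sideDir k / (sidePath k t - x) ^ 2 := by ring
    rw [heq] at h2
    simpa [div_eq_mul_inv] using h2


lemma sideDir_ne_zero (k : Fin 4) : sideDir k ≠ 0 := by
  have hpi := Real.pi_pos
  fin_cases k <;>
    simp [sideDir, Complex.ext_iff, Real.pi_ne_zero] <;> intro h <;> norm_num <;> linarith

lemma omega_lower {lam : ℝ} (hlam : 1 < lam) {z : ℂ}
    (hz : z ∈ SectorDelta \ closure ((fun z => (lam : ℂ) * z) '' SquareD)) :
    lam * Real.pi < z.re + |z.im| := by
  obtain ⟨⟨hre, him⟩, hnc⟩ := hz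
  by_contra h
  push_neg at h
  exact hnc (mem_closure_dilation (by linarith) him.le h)

set_option maxHeartbeats 1000000 in
theorem cauchy_integral_in_bergman_outside_dilation'
    (lam : ℝ) (hlam : 1 < lam) (g : ℂ → ℂ) (hg : BoundaryIntegrable g) :
    DifferentiableOn ℂ (cauchyD2 g)
        (SectorDelta \ closure ((fun z => (lam : ℂ) * z) '' SquareD)) ∧
    ∫⁻ z in SectorDelta \ closure ((fun z => (lam : ℂ) * z) '' SquareD),
        ENNReal.ofReal (‖cauchyD2 g z / (z + 2 * Complex.I * (Real.pi : ℂ))‖ ^ 2) < ⊤ := by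
  have hpi := Real.pi_pos
  set Ω : Set ℂ := SectorDelta \ closure ((fun z => (lam : ℂ) * z) '' SquareD) with hΩ
  have hπlt : ∀ z ∈ Ω, Real.pi < z.re + |z.im| := by
    intro z hz
    have := omega_lower hlam hz
    nlinarith
  constructor
  · -- differentiability
    have hside : ∀ k : Fin 4, DifferentiableOn ℂ
        (fun z => ∫ t in (0:ℝ)..1, g (sidePath k t) * sideDir k / (sidePath k t - z)) Ω := by
      intro k
      by_cases hm : AEStronglyMeasurable (fun t => g (sidePath k t))
          (volume.restrict (Set.uIoc (0:ℝ) 1))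
      · intro z hz
        exact (side_diff k hm (hg k) (hπlt z hz)).differentiableWithinAt
      · refine (differentiableOn_const 0).congr fun z hz => ?_
        refine intervalIntegral.integral_undef fun hint => hm ?_
        have hπ := hπlt z hz
        have hr : 0 < (z.re + |z.im| - Real.pi) / 2 := by linarith
        have hmeas := hint.1.aestronglyMeasurable
        rw [← Set.uIoc_of_le (by norm_num : (0:ℝ) ≤ 1)] at hmeas
        have heq : ∀ t ∈ Set.uIoc (0:ℝ) 1, g (sidePath k t)
            = (g (sidePath k t) * sideDir k / (sidePath k t - z)) * (sidePath k t - z)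
                * (sideDir k)⁻¹ := by
          intro t ht
          have hne : sidePath k t - z ≠ 0 := by
            intro h
            have := dist_side hπ k ht
            rw [h, norm_zero] at this
            linarith
          field_simp
          rw [mul_div_assoc, div_self (sideDir_ne_zero k), mul_one]
        have h2 : AEStronglyMeasurable (fun t =>
            (g (sidePath k t) * sideDir k / (sidePath k t - z)) * (sidePath k t - z)
              * (sideDir k)⁻¹) (volume.restrict (Set.uIoc (0:ℝ) 1)) :=
          ((hmeas.aemeasurable.mul
            (continuous_sidePath_sub k z).aemeasurable).mul_const _).aestronglyMeasurable
        have h3 : (fun t => (g (sidePath k t) * sideDir k / (sidePath k t - z))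
              * (sidePath k t - z) * (sideDir k)⁻¹)
            =ᵐ[volume.restrict (Set.uIoc (0:ℝ) 1)] (fun t => g (sidePath k t)) :=
          (ae_restrict_iff' measurableSet_uIoc).2
            (Filter.Eventually.of_forall fun t ht => (heq t ht).symm)
        exact h2.congr h3
    have : DifferentiableOn ℂ (fun z => (Complex.I * (Real.pi : ℂ))⁻¹ *
        ∑ k : Fin 4, ∫ t in (0:ℝ)..1,
          g (sidePath k t) * sideDir k / (sidePath k t - z)) Ω := by
      apply DifferentiableOn.const_mul
      exact DifferentiableOn.fun_sum fun k _ => hside k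
    exact this
  · -- square integrability
    set B : ℝ := ∑ k : Fin 4, (∫ t in (0:ℝ)..1, ‖g (sidePath k t)‖) * ‖sideDir k‖ with hB
    have hB0 : 0 ≤ B := by
      apply Finset.sum_nonneg
      intro k _
      exact mul_nonneg (intervalIntegral.integral_nonneg (by norm_num)
        (fun u _ => norm_nonneg _)) (norm_nonneg _)
    set K1 : ℝ := 4 * B * lam / (Real.pi * (lam - 1)) with hK1
    have hK10 : 0 ≤ K1 := by
      apply div_nonneg (by nlinarith) (by nlinarith)
    have hptwise : ∀ z ∈ Ω, ENNReal.ofReal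
        (‖cauchyD2 g z / (z + 2 * Complex.I * (Real.pi : ℂ))‖ ^ 2)
          ≤ ENNReal.ofReal (16 * K1 ^ 2 * (1 + ‖z‖) ^ (-(4:ℝ))) := by
      intro z hz
      apply ENNReal.ofReal_le_ofReal
      have hπ := hπlt z hz
      have hs := omega_lower hlam hz
      obtain ⟨⟨hre, him⟩, -⟩ := hz
      set s : ℝ := z.re + |z.im| with hsdef
      set v : ℝ := ‖z‖ with hv
      have hre2 : s ≤ 2 * z.re := by
        rw [hsdef]; linarith
      have hvs : v ≤ s := by
        rw [hv, hsdef]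
        calc ‖z‖ ≤ |z.re| + |z.im| := Complex.norm_le_abs_re_add_abs_im z
          _ = z.re + |z.im| := by rw [abs_of_pos hre]
      have hrev : z.re ≤ v := by
        rw [hv]
        calc z.re ≤ |z.re| := le_abs_self _
          _ ≤ ‖z‖ := Complex.abs_re_le_norm z
      have hv1 : 1 ≤ v := by
        nlinarith [Real.pi_gt_three, mul_pos (sub_pos.2 hlam) hpi]
      have hP : z.re ≤ ‖z + 2 * Complex.I * (Real.pi : ℂ)‖ := by
        calc z.re = (z + 2 * Complex.I * (Real.pi : ℂ)).re := by simp
          _ ≤ |(z + 2 * Complex.I * (Real.pi : ℂ)).re| := le_abs_self _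
          _ ≤ ‖_‖ := Complex.abs_re_le_norm _
      have hF := norm_cauchyD2_le hg hπ
      rw [← hB] at hF
      have hu : ‖cauchyD2 g z / (z + 2 * Complex.I * (Real.pi : ℂ))‖
          ≤ ((Real.pi)⁻¹ * (B / ((s - Real.pi) / 2))) / z.re := by
        rw [norm_div]
        exact div_le_div₀ (mul_nonneg (inv_nonneg.2 hpi.le)
          (div_nonneg hB0 (by linarith))) hF (by linarith) hP
      set u : ℝ := ‖cauchyD2 g z / (z + 2 * Complex.I * (Real.pi : ℂ))‖ with huu
      have hu0 : 0 ≤ u := norm_nonneg _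
      have hK1v : ((Real.pi)⁻¹ * (B / ((s - Real.pi) / 2))) / z.re ≤ K1 / v ^ 2 := by
        rw [div_le_div_iff₀ (by linarith) (by positivity), hK1]
        have hfs : (Real.pi)⁻¹ * (B / ((s - Real.pi) / 2)) = 2 * B / (Real.pi * (s - Real.pi)) := by
          field_simp
        rw [hfs, div_mul_eq_mul_div, div_mul_eq_mul_div, div_le_div_iff₀
          (by nlinarith) (by nlinarith)]
        have hv2s : v ^ 2 ≤ s ^ 2 := by nlinarith
        have f1 : 2 * Real.pi * (B * (lam - 1) * v ^ 2)
            ≤ 2 * Real.pi * (B * (lam - 1) * s ^ 2) :=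
          mul_le_mul_of_nonneg_left (mul_le_mul_of_nonneg_left hv2s
            (mul_nonneg hB0 (by linarith))) (by positivity)
        have f4 : 2 * Real.pi * (B * s * (lam * Real.pi)) ≤ 2 * Real.pi * (B * s * s) :=
          mul_le_mul_of_nonneg_left (mul_le_mul_of_nonneg_left hs.le
            (mul_nonneg hB0 (by linarith))) (by positivity)
        have f3 : 2 * Real.pi * (B * lam * (s - Real.pi) * s)
            ≤ 2 * Real.pi * (B * lam * (s - Real.pi) * (2 * z.re)) :=
          mul_le_mul_of_nonneg_left (mul_le_mul_of_nonneg_left hre2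
            (mul_nonneg (mul_nonneg hB0 (by linarith)) (by linarith))) (by positivity)
        nlinarith [f1, f3, f4]
      have huK : u * v ^ 2 ≤ K1 := by
        have := hu.trans hK1v
        rw [div_eq_mul_inv K1] at this
        calc u * v ^ 2 ≤ (K1 * (v ^ 2)⁻¹) * v ^ 2 := by
              apply mul_le_mul_of_nonneg_right this (by positivity)
          _ = K1 := by field_simp
      have hrpow : (1 + v) ^ (-(4:ℝ)) = ((1 + v) ^ (4:ℕ))⁻¹ := by
        rw [Real.rpow_neg (by linarith), ← Real.rpow_natCast (1 + v) 4]
        norm_num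
      rw [hrpow, mul_comm (16 * K1 ^ 2), ← div_eq_inv_mul, le_div_iff₀ (by positivity)]
      have h16 : (1 + v) ^ (4:ℕ) ≤ 16 * v ^ 4 := by
        calc (1 + v) ^ (4:ℕ) ≤ (2 * v) ^ (4:ℕ) :=
              pow_le_pow_left₀ (by linarith) (by linarith) 4
          _ = 16 * v ^ 4 := by ring
      calc u ^ 2 * (1 + v) ^ (4:ℕ) ≤ u ^ 2 * (16 * v ^ 4) := by
            apply mul_le_mul_of_nonneg_left h16 (by positivity)
        _ = 16 * (u * v ^ 2) ^ 2 := by ring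
        _ ≤ 16 * K1 ^ 2 := by
            have := pow_le_pow_left₀ (mul_nonneg hu0 (by positivity)) huK 2
            linarith
    have hΩmeas : MeasurableSet Ω := (isOpen_sector.sdiff isClosed_closure).measurableSet
    have hint : Integrable (fun z : ℂ => 16 * K1 ^ 2 * (1 + ‖z‖) ^ (-(4:ℝ))) volume := by
      apply Integrable.const_mul
      apply integrable_one_add_norm
      rw [Complex.finrank_real_complex]
      norm_num
    calc ∫⁻ z in Ω, ENNReal.ofReal
          (‖cauchyD2 g z / (z + 2 * Complex.I * (Real.pi : ℂ))‖ ^ 2)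
        ≤ ∫⁻ z in Ω, ENNReal.ofReal (16 * K1 ^ 2 * (1 + ‖z‖) ^ (-(4:ℝ))) := by
          apply lintegral_mono_ae
          exact (ae_restrict_iff' hΩmeas).2 (Filter.Eventually.of_forall hptwise)
      _ ≤ ∫⁻ z, ENNReal.ofReal (16 * K1 ^ 2 * (1 + ‖z‖) ^ (-(4:ℝ))) :=
          setLIntegral_le_lintegral _ _
      _ ≤ ∫⁻ z, ‖(16 * K1 ^ 2 * (1 + ‖z‖) ^ (-(4:ℝ)))‖ₑ := by
          apply lintegral_mono
          intro z
          exact Real.ofReal_le_enorm _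
      _ < ⊤ := hint.hasFiniteIntegral

/-- For `λ > 1`, the Cauchy-type integral of an integrable boundary function,
divided by `P(z) = z + 2iπ`, is square integrable on `Δ ∖ closure(λD)`. -/
theorem cauchy_integral_in_bergman_outside_dilation
    (lam : ℝ) (hlam : 1 < lam) (g : ℂ → ℂ) (hg : BoundaryIntegrable g) :
    DifferentiableOn ℂ (cauchyD2 g)
        (SectorDelta \ closure ((fun z => (lam : ℂ) * z) '' SquareD)) ∧
    ∫⁻ z in SectorDelta \ closure ((fun z => (lam : ℂ) * z) '' SquareD),
        ENNReal.ofReal (‖cauchyD2 g z / (z + 2 * Complex.I * (Real.pi : ℂ))‖ ^ 2) < ⊤ :=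
  cauchy_integral_in_bergman_outside_dilation' lam hlam g hg

end
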